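/- For every infinite set A and natural numbers m, n with m ≥ n + 2, there is an injection from S_n(A) into S_m(A), where S_k(A) is the set of permutations of A moving exactly k points. -/

import Mathlib

/-- `S_k(A)`: the set of permutations of `A` moving exactly `k` points. -/
def permsMovingExactly (A : Type*) (k : ℕ) : Set (Equiv.Perm A) :=
  {s | {a | s a ≠ a}.Finite ∧ {a | s a ≠ a}.ncard = k}

open Cardinal

lemma aux_le (A : Type*) [Infinite A] (k : ℕ) :
    #(permsMovingExactly A k) ≤ #A := by
  have h1 : #(permsMovingExactly A k) ≤ #(Finset (A × A)) := by
    classical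
    refine Cardinal.mk_le_of_injective (f := fun s => s.2.1.toFinset.image (fun a => (a, s.1 a))) ?_
    rintro ⟨s, hs, hcs⟩ ⟨t, ht, hct⟩ hst
    replace hst : hs.toFinset.image (fun a => (a, s a)) = ht.toFinset.image (fun a => (a, t a)) := hst
    have hmov : hs.toFinset = ht.toFinset := by
      have := congrArg (Finset.image Prod.fst) hst
      rwa [Finset.image_image, Finset.image_image,
        show (Prod.fst ∘ fun a => (a, s a)) = id from rfl,
        show (Prod.fst ∘ fun a => (a, t a)) = id from rfl,
        Finset.image_id, Finset.image_id] at this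
    have : s = t := by
      ext a
      by_cases ha : s a = a
      · by_cases ha' : t a = a
        · rw [ha, ha']
        · -- a ∈ mov t = mov s, contradiction with ha
          exfalso
          have : a ∈ ht.toFinset := by simpa using ha'
          rw [← hmov] at this
          simp at this
          exact this ha
      · have hmem : a ∈ hs.toFinset := by simpa using ha
        have : (a, s a) ∈ ht.toFinset.image (fun a => (a, t a)) := by
          rw [← hst]; exact Finset.mem_image_of_mem _ hmem
        simp only [Finset.mem_image] at this
        obtain ⟨b, _, hb⟩ := this
        obtain ⟨rfl, h2⟩ := Prod.mk.injEq .. ▸ hb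
        exact h2.symm ▸ rfl
    exact Subtype.ext this
  have h2 : #(Finset (A × A)) = #(A × A) := Cardinal.mk_finset_of_infinite _
  have h3 : #(A × A) = #A := by
    rw [Cardinal.mk_prod]
    simp only [Cardinal.lift_id]
    exact Cardinal.mul_eq_self (Cardinal.aleph0_le_mk A)
  exact h1.trans (le_of_eq (h2.trans h3))

lemma aux_ge (A : Type*) [Infinite A] (k : ℕ) :
    Cardinal.mk A ≤ #(permsMovingExactly A (k + 2)) := by
  classical
  have hcard : #(Fin (k+2) × A) = #A := by
    rw [Cardinal.mk_prod]
    simp only [Cardinal.mk_fintype, Fintype.card_fin, Cardinal.lift_natCast, Cardinal.lift_uzero]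
    apply Cardinal.mul_eq_right (Cardinal.aleph0_le_mk A)
    · exact le_trans (le_of_lt (Cardinal.nat_lt_aleph0 _)) (Cardinal.aleph0_le_mk A)
    · exact Nat.cast_ne_zero.mpr (Nat.succ_ne_zero _)
  obtain ⟨e⟩ := Cardinal.eq.mp hcard
  have hrot : ∀ i : Fin (k+2), finRotate (k+2) i ≠ i := by
    intro i
    simp [finRotate_succ_apply]
  -- for each a : A define a permutation moving exactly the points e '' (univ ×ˢ {a})
  let p : A → Equiv.Perm (Fin (k+2) × A) := fun a =>
    Equiv.prodCongrLeft (fun b => if b = a then finRotate (k+2) else Equiv.refl _)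
  have hp_mov : ∀ a, {x : Fin (k+2) × A | p a x ≠ x} = Set.univ ×ˢ {a} := by
    have hap : ∀ (a : A) i b, p a (i, b) =
        ((if b = a then finRotate (k+2) else Equiv.refl _) i, b) := fun _ _ _ => rfl
    intro a
    ext ⟨i, b⟩
    by_cases hb : b = a
    · subst hb; simp [hap, hrot i]
    · simp [hap, hb]
  let q : A → Equiv.Perm A := fun a => e.permCongr (p a)
  have hq_mov : ∀ a, {x : A | q a x ≠ x} = e '' (Set.univ ×ˢ {a}) := by
    intro a
    rw [← hp_mov a]
    ext x
    simp only [Set.mem_setOf_eq, Set.mem_image]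
    constructor
    · intro hx
      refine ⟨e.symm x, fun hfix => hx ?_, by simp⟩
      simp [q, Equiv.permCongr_apply, hfix]
    · rintro ⟨y, hy, rfl⟩
      simp only [q, Equiv.permCongr_apply, Equiv.symm_apply_apply]
      intro hcon
      exact hy (e.injective hcon)
  have hfin : ∀ a, ({x : A | q a x ≠ x}).Finite := by
    intro a
    rw [hq_mov a]
    exact ((Set.toFinite _).image e)
  have hncard : ∀ a, ({x : A | q a x ≠ x}).ncard = k + 2 := by
    intro a
    rw [hq_mov a, Set.ncard_image_of_injective _ e.injective]
    have : (Set.univ ×ˢ {a} : Set (Fin (k+2) × A)) = (fun i => (i, a)) '' Set.univ := by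
      ext ⟨i, b⟩; simp [eq_comm]
    rw [this, Set.ncard_image_of_injective _ (fun i j hij => (Prod.mk.injEq .. ▸ hij).1),
      Set.ncard_univ, Nat.card_eq_fintype_card, Fintype.card_fin]
  refine Cardinal.mk_le_of_injective (f := fun a => (⟨q a, hfin a, hncard a⟩ : permsMovingExactly A (k+2))) ?_
  intro a b hab
  have hq : q a = q b := congrArg Subtype.val hab
  have : {x : A | q a x ≠ x} = {x : A | q b x ≠ x} := by rw [hq]
  rw [hq_mov a, hq_mov b, Set.image_eq_image e.injective] at this
  have hmem : ((0 : Fin (k+2)), a) ∈ (Set.univ ×ˢ {b} : Set (Fin (k+2) × A)) := by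
    rw [← this]; simp
  simpa using hmem.2

/-- For every infinite set `A` and `m ≥ n + 2`, there is an injection from
`S_n(A)` into `S_m(A)`. -/
theorem stmt_10 (A : Type*) [Infinite A] (m n : ℕ) (h : m ≥ n + 2) :
    ∃ f : permsMovingExactly A n → permsMovingExactly A m, Function.Injective f := by
  obtain ⟨k, rfl⟩ : ∃ k, m = k + 2 := ⟨m - 2, by omega⟩
  have hle : #(permsMovingExactly A n) ≤ #(permsMovingExactly A (k+2)) :=
    (aux_le A n).trans (aux_ge A k)
  obtain ⟨f⟩ := Cardinal.le_def _ _ |>.mp hle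
  exact ⟨f, f.injective⟩
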